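/- In the two-level additive Schwarz setting with GenEO-enriched coarse space V₀ = V_G + V^τ_GenEO (where V^τ_GenEO contains all vectors R_jᵀD_j(I−ξ_{0j})V_{jk} for eigenpairs of the local GEVPs (I−ξ_{0j}ᵀ)D_jR_jAR_jᵀD_j(I−ξ_{0j})V_{jk} = λ_{jk}A_j^Neu V_{jk} with λ_{jk} > τ), the operator R_{AS,2} admits a stable decomposition with constant c_T = 1/(1 + k₁τ): for every U ∈ ℝ^n there exists (U₀,(U_i)) with R_{AS,2}(U₀,(U_i)) = U and (EU₀,U₀) + ∑_{i=1}^N (R_iAR_iᵀU_i, U_i) ≤ (1 + k₁τ) UᵀAU. -/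

import Mathlib

open Matrix

private lemma dot_shift {m n : ℕ} (B : Matrix (Fin m) (Fin n) ℝ) (x : Fin n → ℝ)
    (y : Fin m → ℝ) : (B *ᵥ x) ⬝ᵥ y = x ⬝ᵥ (Bᵀ *ᵥ y) := by
  rw [dotProduct_comm, dotProduct_mulVec, ← mulVec_transpose, dotProduct_comm]

private lemma mulVec_sum' {m n ι : Type*} [Fintype ι] [Fintype n]
    (B : Matrix m n ℝ) (f : ι → n → ℝ) :
    B *ᵥ (∑ i, f i) = ∑ i, B *ᵥ f i :=
  map_sum (AddMonoidHom.mk' (fun v => B *ᵥ v) (fun v w => mulVec_add B v w)) f Finset.univ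

private lemma sum_mulVec' {m n ι : Type*} [Fintype ι] [Fintype n]
    (M : ι → Matrix m n ℝ) (v : n → ℝ) :
    (∑ i, M i) *ᵥ v = ∑ i, M i *ᵥ v :=
  map_sum (AddMonoidHom.mk' (fun B : Matrix m n ℝ => B *ᵥ v)
    (fun B C => add_mulVec B C v)) M Finset.univ

theorem stmt10 {n n0 N : ℕ} (ni : Fin N → ℕ)
    (A : Matrix (Fin n) (Fin n) ℝ) (hA : A.PosDef)
    (R : ∀ i : Fin N, Matrix (Fin (ni i)) (Fin n) ℝ)
    (D : ∀ i : Fin N, Matrix (Fin (ni i)) (Fin (ni i)) ℝ)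
    (hD : ∀ i, (D i).IsDiag)
    (hPoU : ∑ i, (R i)ᵀ * D i * R i = 1)
    (ANeu : ∀ i : Fin N, Matrix (Fin (ni i)) (Fin (ni i)) ℝ)
    (hANeu : ∀ i, (ANeu i).PosDef)
    (k1 : ℝ)
    (hk1 : ∀ U : Fin n → ℝ,
      ∑ i, (R i *ᵥ U) ⬝ᵥ (ANeu i *ᵥ (R i *ᵥ U)) ≤ k1 * (U ⬝ᵥ (A *ᵥ U)))
    (Z : Matrix (Fin n) (Fin n0) ℝ)
    (hZ : Function.Injective Z.mulVec)
    (P0 : Matrix (Fin n) (Fin n) ℝ)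
    (hP0 : P0 = Z * (Zᵀ * A * Z)⁻¹ * Zᵀ * A)
    (xi : ∀ i : Fin N, Matrix (Fin (ni i)) (Fin (ni i)) ℝ)
    (hxi : ∀ (i : Fin N) (U : Fin n → ℝ),
      ∃ c : Fin n0 → ℝ, Z *ᵥ c = (R i)ᵀ *ᵥ (D i *ᵥ (xi i *ᵥ (R i *ᵥ U))))
    (π : ∀ i : Fin N, Matrix (Fin (ni i)) (Fin (ni i)) ℝ)
    (τ : ℝ) (hτ : 0 < τ)
    (hπbound : ∀ (j : Fin N) (Uj : Fin (ni j) → ℝ),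
      ((R j * A * (R j)ᵀ) *ᵥ (D j *ᵥ ((1 - xi j) *ᵥ ((1 - π j) *ᵥ Uj)))) ⬝ᵥ
          (D j *ᵥ ((1 - xi j) *ᵥ ((1 - π j) *ᵥ Uj))) ≤
        τ * ((ANeu j *ᵥ Uj) ⬝ᵥ Uj))
    (hGenEO : ∀ (j : Fin N) (Uj : Fin (ni j) → ℝ),
      ∃ c : Fin n0 → ℝ, Z *ᵥ c = (R j)ᵀ *ᵥ (D j *ᵥ ((1 - xi j) *ᵥ (π j *ᵥ Uj)))) :
    ∀ U : Fin n → ℝ,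
      ∃ (U0 : Fin n0 → ℝ) (Ui : ∀ i, Fin (ni i) → ℝ),
        Z *ᵥ U0 + (1 - P0) *ᵥ ∑ i, (R i)ᵀ *ᵥ Ui i = U ∧
        ((Zᵀ * A * Z) *ᵥ U0) ⬝ᵥ U0 +
            ∑ i, ((R i * A * (R i)ᵀ) *ᵥ Ui i) ⬝ᵥ Ui i ≤
          (1 + k1 * τ) * (U ⬝ᵥ (A *ᵥ U)) := by
  intro U
  classical
  have hAsym : Aᵀ = A := by have h : A.IsSymm := by simpa using hA.1
                            exact h
  set E := Zᵀ * A * Z with hEdef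
  have hEsym : Eᵀ = E := by
    rw [hEdef, transpose_mul, transpose_mul, transpose_transpose, hAsym, Matrix.mul_assoc]
  -- quadratic-form identity
  have quadE : ∀ x : Fin n0 → ℝ, x ⬝ᵥ (E *ᵥ x) = (Z *ᵥ x) ⬝ᵥ (A *ᵥ (Z *ᵥ x)) := by
    intro x
    rw [hEdef, ← mulVec_mulVec, ← mulVec_mulVec, ← dot_shift]
  have hEpd : E.PosDef := by
    refine Matrix.PosDef.of_dotProduct_mulVec_pos ?_ ?_
    · show Eᴴ = E
      simpa using hEsym
    · intro x hx
      have hzx : Z *ᵥ x ≠ 0 := fun h => hx (hZ (h.trans (Z.mulVec_zero).symm))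
      have h2 := hA.dotProduct_mulVec_pos hzx
      simpa [quadE x] using h2
  have hEinv : E⁻¹ * E = 1 := nonsing_inv_mul E (isUnit_iff_ne_zero.mpr hEpd.det_pos.ne')
  have hE' : Zᵀ * (A * Z) = E := by rw [hEdef, Matrix.mul_assoc]
  have hP0Z : P0 * Z = Z := by
    rw [hP0]
    simp only [Matrix.mul_assoc]
    rw [hE', hEinv, Matrix.mul_one]
  have hP0idem : P0 * P0 = P0 := by
    nth_rewrite 2 [hP0]
    simp only [← Matrix.mul_assoc]
    rw [hP0Z, ← hP0]
  have hP0T : P0ᵀ * A = A * P0 := by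
    rw [hP0]
    simp only [transpose_mul, transpose_transpose, transpose_nonsing_inv, hAsym, hEsym,
      Matrix.mul_assoc]
  -- the decomposition
  set Ui : ∀ i, Fin (ni i) → ℝ :=
    fun i => D i *ᵥ ((1 - xi i) *ᵥ ((1 - π i) *ᵥ (R i *ᵥ U))) with hUi
  set W : Fin n → ℝ := ∑ i, (R i)ᵀ *ᵥ Ui i with hW
  set U0 : Fin n0 → ℝ := E⁻¹ *ᵥ (Zᵀ *ᵥ (A *ᵥ U)) with hU0
  have hZU0 : Z *ᵥ U0 = P0 *ᵥ U := by
    rw [hU0, hP0, mulVec_mulVec, mulVec_mulVec, mulVec_mulVec]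
  -- U - W is in the range of Z
  choose c1 hc1 using fun i => hxi i U
  choose c2 hc2 using fun i => hGenEO i (R i *ᵥ U)
  have hsplit : ∀ i, (R i)ᵀ *ᵥ (D i *ᵥ (R i *ᵥ U)) =
      Z *ᵥ c1 i + Z *ᵥ c2 i + (R i)ᵀ *ᵥ Ui i := by
    intro i
    rw [hc1 i, hc2 i]
    simp only [hUi, sub_mulVec, one_mulVec, mulVec_sub, mulVec_add]
    abel
  have hUdecomp : U = Z *ᵥ (∑ i, (c1 i + c2 i)) + W := by
    have h1 : U = ∑ i, (R i)ᵀ *ᵥ (D i *ᵥ (R i *ᵥ U)) := by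
      conv_lhs => rw [← one_mulVec U, ← hPoU, sum_mulVec']
      refine Finset.sum_congr rfl fun i _ => ?_
      rw [← mulVec_mulVec, ← mulVec_mulVec]
    rw [h1]
    simp only [hsplit, mulVec_sum', mulVec_add, hW, Finset.sum_add_distrib]
  set c := ∑ i, (c1 i + c2 i) with hc
  refine ⟨U0, Ui, ?_, ?_⟩
  · -- decomposition identity
    have hPU : P0 *ᵥ U = Z *ᵥ c + P0 *ᵥ W := by
      conv_lhs => rw [hUdecomp]
      rw [mulVec_add, mulVec_mulVec, hP0Z]
    rw [hZU0, sub_mulVec, one_mulVec, hPU, hUdecomp]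
    abel
  · -- energy estimate
    set v : Fin n → ℝ := P0 *ᵥ U with hv
    have hcross : v ⬝ᵥ (A *ᵥ (U - v)) = 0 := by
      have hPw : P0 *ᵥ (U - v) = 0 := by
        rw [mulVec_sub, hv, mulVec_mulVec, hP0idem, sub_self]
      nth_rewrite 1 [hv]
      rw [dot_shift, mulVec_mulVec, hP0T, ← mulVec_mulVec, hPw, mulVec_zero, dotProduct_zero]
    have hcross' : (U - v) ⬝ᵥ (A *ᵥ v) = 0 := by
      rw [dotProduct_mulVec, ← mulVec_transpose, hAsym, dotProduct_comm]
      exact hcross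
    have hqw : 0 ≤ (U - v) ⬝ᵥ (A *ᵥ (U - v)) := by
      have := hA.posSemidef.dotProduct_mulVec_nonneg (U - v)
      simpa using this
    have hsplitq : U ⬝ᵥ (A *ᵥ U) = v ⬝ᵥ (A *ᵥ v) + (U - v) ⬝ᵥ (A *ᵥ (U - v)) := by
      have hU' : U = v + (U - v) := by abel
      calc U ⬝ᵥ (A *ᵥ U) = (v + (U - v)) ⬝ᵥ (A *ᵥ (v + (U - v))) := by rw [← hU']
        _ = v ⬝ᵥ (A *ᵥ v) + v ⬝ᵥ (A *ᵥ (U - v)) + ((U - v) ⬝ᵥ (A *ᵥ v)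
              + (U - v) ⬝ᵥ (A *ᵥ (U - v))) := by
            simp only [mulVec_add, dotProduct_add, add_dotProduct]
            ring
        _ = v ⬝ᵥ (A *ᵥ v) + (U - v) ⬝ᵥ (A *ᵥ (U - v)) := by rw [hcross, hcross']; ring
    have hterm1 : (E *ᵥ U0) ⬝ᵥ U0 ≤ U ⬝ᵥ (A *ᵥ U) := by
      rw [dotProduct_comm, quadE U0, hZU0, hsplitq]
      linarith
    have hterm2 : ∑ i, ((R i * A * (R i)ᵀ) *ᵥ Ui i) ⬝ᵥ Ui i ≤ k1 * τ * (U ⬝ᵥ (A *ᵥ U)) := by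
      have hstep : ∑ i, ((R i * A * (R i)ᵀ) *ᵥ Ui i) ⬝ᵥ Ui i ≤
          τ * ∑ i, (R i *ᵥ U) ⬝ᵥ (ANeu i *ᵥ (R i *ᵥ U)) := by
        rw [Finset.mul_sum]
        refine Finset.sum_le_sum fun i _ => ?_
        have h := hπbound i (R i *ᵥ U)
        rw [hUi]
        calc ((R i * A * (R i)ᵀ) *ᵥ (D i *ᵥ ((1 - xi i) *ᵥ ((1 - π i) *ᵥ (R i *ᵥ U))))) ⬝ᵥ
              (D i *ᵥ ((1 - xi i) *ᵥ ((1 - π i) *ᵥ (R i *ᵥ U))))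
            ≤ τ * ((ANeu i *ᵥ (R i *ᵥ U)) ⬝ᵥ (R i *ᵥ U)) := h
          _ = τ * ((R i *ᵥ U) ⬝ᵥ (ANeu i *ᵥ (R i *ᵥ U))) := by rw [dotProduct_comm]
      calc ∑ i, ((R i * A * (R i)ᵀ) *ᵥ Ui i) ⬝ᵥ Ui i
          ≤ τ * ∑ i, (R i *ᵥ U) ⬝ᵥ (ANeu i *ᵥ (R i *ᵥ U)) := hstep
        _ ≤ τ * (k1 * (U ⬝ᵥ (A *ᵥ U))) := by
            exact mul_le_mul_of_nonneg_left (hk1 U) hτ.le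
        _ = k1 * τ * (U ⬝ᵥ (A *ᵥ U)) := by ring
    calc (E *ᵥ U0) ⬝ᵥ U0 + ∑ i, ((R i * A * (R i)ᵀ) *ᵥ Ui i) ⬝ᵥ Ui i
        ≤ U ⬝ᵥ (A *ᵥ U) + k1 * τ * (U ⬝ᵥ (A *ᵥ U)) := add_le_add hterm1 hterm2
      _ = (1 + k1 * τ) * (U ⬝ᵥ (A *ᵥ U)) := by ring
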